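/- arXiv:2209.14105 — 2 statements merged into one kernel-verified Lean document; each statement's English description precedes it below -/
import Mathlib

section
/- Upper bound in Lemma 1 (adversarial Rademacher complexity, linear class): with F = {x ↦ ⟨θ, x⟩ : ‖θ‖_p ≤ Θ} and F̂ = {(x, y) ↦ min_{‖δ‖∞ ≤ ε} y⟨θ, x + δ⟩ : ‖θ‖_p ≤ Θ}, one has R_S(F̂) ≤ R_S(F) + ε·Θ·d^{1−1/p}/√n. -/
/-- Empirical Rademacher complexity of a function class `F` on sample `x`. -/
noncomputable def empRad {α : Type*} (n : ℕ) (x : Fin n → α) (F : Set (α → ℝ)) : ℝ :=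
  (1 / n) * ((1 / 2 ^ n) * ∑ σ : Fin n → Bool,
    sSup {v : ℝ | ∃ f ∈ F, v = ∑ i, (if σ i then (1 : ℝ) else -1) * f (x i)})

/-- The `ℓ_p` norm of a vector in `ℝ^d` (for real exponent `p`). -/
noncomputable def lpNorm {d : ℕ} (θ : Fin d → ℝ) (p : ℝ) : ℝ :=
  (∑ i, |θ i| ^ p) ^ (1 / p)

section helpers
open Finset


private lemma orth {n : ℕ} {i j : Fin n} (hij : i ≠ j) :
    ∑ σ : Fin n → Bool, ((if σ i then (1:ℝ) else -1) * (if σ j then (1:ℝ) else -1)) = 0 := by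
  classical
  apply Finset.sum_ninvolution (fun σ => Function.update σ i (!σ i))
  · intro σ
    rw [Function.update_self, Function.update_of_ne (Ne.symm hij)]
    cases σ i <;> cases σ j <;> norm_num
  · intro σ _ h
    have := congrFun h i
    simp at this
  · intro σ; exact Finset.mem_univ _
  · intro σ
    funext k
    by_cases hk : k = i
    · subst hk; simp
    · simp [Function.update_of_ne hk]

private lemma sum_sq_sgn (n : ℕ) :
    ∑ σ : Fin n → Bool, (∑ i, if σ i then (1:ℝ) else -1) ^ 2 = 2 ^ n * n := by
  classical
  have h : ∀ σ : Fin n → Bool, (∑ i, if σ i then (1:ℝ) else -1) ^ 2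
      = ∑ i : Fin n, ∑ j : Fin n,
        ((if σ i then (1:ℝ) else -1) * (if σ j then (1:ℝ) else -1)) := by
    intro σ
    rw [sq, Finset.sum_mul_sum]
  simp_rw [h]
  rw [Finset.sum_comm]
  have h2 : ∀ i : Fin n, ∑ σ : Fin n → Bool, ∑ j : Fin n,
      ((if σ i then (1:ℝ) else -1) * (if σ j then (1:ℝ) else -1)) = 2 ^ n := by
    intro i
    rw [Finset.sum_comm]
    have h3 : ∀ j : Fin n, ∑ σ : Fin n → Bool,
        ((if σ i then (1:ℝ) else -1) * (if σ j then (1:ℝ) else -1))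
        = if i = j then (2:ℝ)^n else 0 := by
      intro j
      by_cases hij : i = j
      · subst hij
        simp only [if_pos rfl]
        have : ∀ σ : Fin n → Bool,
            ((if σ i then (1:ℝ) else -1) * (if σ i then (1:ℝ) else -1)) = 1 := by
          intro σ; cases σ i <;> norm_num
        simp_rw [this]
        simp [Finset.card_univ]
      · rw [if_neg hij]
        exact orth hij
    simp_rw [h3]
    simp
  simp_rw [h2]
  simp [mul_comm]



private lemma abs_sum_sgn_le (n : ℕ)
    (hsq : ∑ σ : Fin n → Bool, (∑ i, if σ i then (1:ℝ) else -1) ^ 2 = 2 ^ n * n) :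
    ∑ σ : Fin n → Bool, |∑ i, if σ i then (1:ℝ) else -1| ≤ 2 ^ n * Real.sqrt n := by
  classical
  have key : (∑ σ : Fin n → Bool, |∑ i, if σ i then (1:ℝ) else -1|) ^ 2
      ≤ ((2:ℝ) ^ n * Real.sqrt n) ^ 2 := by
    calc (∑ σ : Fin n → Bool, |∑ i, if σ i then (1:ℝ) else -1|) ^ 2
        ≤ ((Finset.univ : Finset (Fin n → Bool)).card : ℝ) * ∑ σ : Fin n → Bool,
            |∑ i, if σ i then (1:ℝ) else -1| ^ 2 := sq_sum_le_card_mul_sum_sq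
      _ = (2:ℝ)^n * ∑ σ : Fin n → Bool, (∑ i, if σ i then (1:ℝ) else -1) ^ 2 := by
          simp [Finset.card_univ, sq_abs]
      _ = (2:ℝ)^n * ((2:ℝ)^n * n) := by rw [hsq]
      _ = ((2:ℝ) ^ n * Real.sqrt n) ^ 2 := by
          rw [mul_pow, Real.sq_sqrt (Nat.cast_nonneg n)]; ring
  have h1 : 0 ≤ ∑ σ : Fin n → Bool, |∑ i, if σ i then (1:ℝ) else -1| :=
    Finset.sum_nonneg fun _ _ => abs_nonneg _
  have h2 : (0:ℝ) ≤ 2 ^ n * Real.sqrt n := by positivity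
  calc ∑ σ : Fin n → Bool, |∑ i, if σ i then (1:ℝ) else -1|
      = Real.sqrt ((∑ σ : Fin n → Bool, |∑ i, if σ i then (1:ℝ) else -1|) ^ 2) :=
        (Real.sqrt_sq h1).symm
    _ ≤ Real.sqrt (((2:ℝ) ^ n * Real.sqrt n) ^ 2) := Real.sqrt_le_sqrt key
    _ = 2 ^ n * Real.sqrt n := Real.sqrt_sq h2

private lemma l1_le_lp {d : ℕ} (p : ℝ) (hp : 1 ≤ p) (θ : Fin d → ℝ) :
    ∑ j, |θ j| ≤ (d : ℝ) ^ (1 - 1/p) * (∑ j, |θ j| ^ p) ^ (1/p) := by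
  have := Real.inner_le_weight_mul_Lp_of_nonneg Finset.univ hp (fun _ : Fin d => 1)
    (fun j => |θ j|) (fun _ => zero_le_one) (fun j => abs_nonneg _)
  simpa [one_div, Finset.card_univ] using this



private lemma sInf_adv {d : ℕ} (ε : ℝ) (hε : 0 ≤ ε) (θ xx : Fin d → ℝ) {yy : ℝ}
    (hyy : yy = 1 ∨ yy = -1) :
    sInf {v : ℝ | ∃ δ : Fin d → ℝ, (∀ j, |δ j| ≤ ε) ∧
        v = yy * ∑ j, θ j * (xx j + δ j)} =
      yy * (∑ j, θ j * xx j) - ε * ∑ j, |θ j| := by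
  classical
  have hyabs : |yy| = 1 := by rcases hyy with h | h <;> simp [h]
  set m := yy * (∑ j, θ j * xx j) - ε * ∑ j, |θ j| with hm
  have hsplit : ∀ δ : Fin d → ℝ, yy * ∑ j, θ j * (xx j + δ j)
      = yy * (∑ j, θ j * xx j) + ∑ j, yy * (θ j * δ j) := by
    intro δ
    rw [← Finset.mul_sum, ← mul_add, ← Finset.sum_add_distrib]
    congr 1
    exact Finset.sum_congr rfl fun j _ => by ring
  have hterm : ∀ (δ : Fin d → ℝ) (j), |δ j| ≤ ε → -(ε * |θ j|) ≤ yy * (θ j * δ j) := by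
    intro δ j hδj
    have habs : |yy * (θ j * δ j)| ≤ ε * |θ j| := by
      rw [abs_mul, hyabs, one_mul, abs_mul]
      calc |θ j| * |δ j| ≤ |θ j| * ε :=
            mul_le_mul_of_nonneg_left hδj (abs_nonneg _)
        _ = ε * |θ j| := mul_comm _ _
    linarith [(abs_le.mp habs).1]
  have hlow : ∀ v ∈ {v : ℝ | ∃ δ : Fin d → ℝ, (∀ j, |δ j| ≤ ε) ∧
      v = yy * ∑ j, θ j * (xx j + δ j)}, m ≤ v := by
    rintro v ⟨δ, hδ, rfl⟩
    rw [hsplit, hm]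
    have h2 : ∑ j, -(ε * |θ j|) ≤ ∑ j, yy * (θ j * δ j) :=
      Finset.sum_le_sum fun j _ => hterm δ j (hδ j)
    have h3 : ∑ j, -(ε * |θ j|) = -(ε * ∑ j, |θ j|) := by
      rw [Finset.sum_neg_distrib, ← Finset.mul_sum]
    linarith
  have hmem : m ∈ {v : ℝ | ∃ δ : Fin d → ℝ, (∀ j, |δ j| ≤ ε) ∧
      v = yy * ∑ j, θ j * (xx j + δ j)} := by
    refine ⟨fun j => if 0 ≤ yy * θ j then -ε else ε, fun j => ?_, ?_⟩
    · by_cases h : 0 ≤ yy * θ j <;> simp [h, abs_of_nonneg hε]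
    · have hval : ∀ j, yy * (θ j * (if 0 ≤ yy * θ j then -ε else ε)) = -(ε * |θ j|) := by
        intro j
        have habs : |yy * θ j| = |θ j| := by rw [abs_mul, hyabs, one_mul]
        by_cases h : 0 ≤ yy * θ j
        · rw [if_pos h, ← habs, abs_of_nonneg h]; ring
        · rw [if_neg h, ← habs, abs_of_neg (lt_of_not_ge h)]; ring
      rw [hsplit, hm]
      simp_rw [hval]
      rw [Finset.sum_neg_distrib, ← Finset.mul_sum, sub_eq_add_neg]
  exact le_antisymm (csInf_le ⟨m, hlow⟩ hmem) (le_csInf ⟨m, hmem⟩ hlow)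

end helpers

/-- Upper bound of Lemma 1: for the linear class `F = {x ↦ ⟨θ,x⟩ : ‖θ‖_p ≤ Θ}` and the
adversarial class `F̂ = {(x,y) ↦ min_{‖δ‖∞ ≤ ε} y⟨θ, x+δ⟩ : ‖θ‖_p ≤ Θ}`,
`R_S(F̂) ≤ R_S(F) + εΘd^(1−1/p)/√n`. -/
theorem adv_empRad_upper (d n : ℕ) (p : ℝ) (hp : 1 ≤ p) (ε Θ : ℝ)
    (hε : 0 ≤ ε) (hΘ : 0 ≤ Θ)
    (x : Fin n → (Fin d → ℝ)) (y : Fin n → ℝ) (hy : ∀ i, y i = 1 ∨ y i = -1) :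
    empRad n (fun i => (x i, y i))
        {g : (Fin d → ℝ) × ℝ → ℝ | ∃ θ : Fin d → ℝ, lpNorm θ p ≤ Θ ∧
          g = fun xy => sInf {v : ℝ | ∃ δ : Fin d → ℝ, (∀ j, |δ j| ≤ ε) ∧
            v = xy.2 * ∑ j, θ j * (xy.1 j + δ j)}} ≤
      empRad n x {f : (Fin d → ℝ) → ℝ | ∃ θ : Fin d → ℝ, lpNorm θ p ≤ Θ ∧
          f = fun v => ∑ j, θ j * v j} +
        ε * Θ * (d : ℝ) ^ (1 - 1 / p) / Real.sqrt n := by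
  classical
  rcases Nat.eq_zero_or_pos n with hn | hn
  · subst hn
    simp [empRad]
  have hnR : (0:ℝ) < n := by exact_mod_cast hn
  have hpne : p ≠ 0 := by positivity
  have hdK : 0 ≤ (d:ℝ) ^ (1 - 1/p) := Real.rpow_nonneg (Nat.cast_nonneg d) _
  set K := Θ * (d:ℝ) ^ (1 - 1/p) with hKdef
  have hKnn : 0 ≤ K := mul_nonneg hΘ hdK
  have hθK : ∀ θ : Fin d → ℝ, lpNorm θ p ≤ Θ → ∑ j, |θ j| ≤ K := by
    intro θ hθ
    calc ∑ j, |θ j| ≤ (d:ℝ)^(1-1/p) * (∑ j, |θ j| ^ p) ^ (1/p) := l1_le_lp p hp θ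
      _ ≤ (d:ℝ)^(1-1/p) * Θ := mul_le_mul_of_nonneg_left hθ hdK
      _ = K := mul_comm _ _
  have h0 : lpNorm (0 : Fin d → ℝ) p ≤ Θ := by
    unfold lpNorm
    simp only [Pi.zero_apply, abs_zero, Real.zero_rpow hpne, Finset.sum_const_zero]
    rw [Real.zero_rpow (one_div_ne_zero hpne)]
    exact hΘ
  -- sign flip map
  set τ : (Fin n → Bool) → (Fin n → Bool) := fun σ i => if y i = 1 then σ i else !(σ i) with hτ
  have hτinv : Function.Involutive τ := by
    intro σ; funext i; by_cases h : y i = 1 <;> simp [hτ, h]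
  have he : ∀ (σ : Fin n → Bool) (i : Fin n),
      (if τ σ i then (1:ℝ) else -1) = y i * (if σ i then (1:ℝ) else -1) := by
    intro σ i
    rcases hy i with h | h
    · simp [hτ, h]
    · have h1 : y i ≠ 1 := by rw [h]; norm_num
      cases hσ : σ i <;> simp [hτ, h1, h, hσ]
      exact fun hc => absurd hc (by norm_num)
  have hBbdd : ∀ σ : Fin n → Bool, BddAbove
      {v : ℝ | ∃ f ∈ {f : (Fin d → ℝ) → ℝ | ∃ θ : Fin d → ℝ, lpNorm θ p ≤ Θ ∧
          f = fun v => ∑ j, θ j * v j}, v = ∑ i, (if σ i then (1:ℝ) else -1) * f (x i)} := by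
    intro σ
    refine ⟨∑ i, ∑ j, K * |x i j|, ?_⟩
    rintro v ⟨f, ⟨θ, hθ, rfl⟩, rfl⟩
    refine Finset.sum_le_sum fun i _ => ?_
    have h1 : (if σ i then (1:ℝ) else -1) * ∑ j, θ j * x i j ≤ |∑ j, θ j * x i j| := by
      cases hσ : σ i
      · simpa [hσ] using neg_le_abs (∑ j, θ j * x i j)
      · simpa [hσ] using le_abs_self (∑ j, θ j * x i j)
    refine h1.trans ?_
    refine (Finset.abs_sum_le_sum_abs _ _).trans (Finset.sum_le_sum fun j _ => ?_)
    rw [abs_mul]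
    refine mul_le_mul_of_nonneg_right ?_ (abs_nonneg _)
    exact le_trans (Finset.single_le_sum (fun k _ => abs_nonneg (θ k))
      (Finset.mem_univ j)) (hθK θ hθ)
  have hBmem : ∀ (σ : Fin n → Bool) (θ : Fin d → ℝ), lpNorm θ p ≤ Θ →
      (∑ i, (if σ i then (1:ℝ) else -1) * ∑ j, θ j * x i j) ∈
      {v : ℝ | ∃ f ∈ {f : (Fin d → ℝ) → ℝ | ∃ θ : Fin d → ℝ, lpNorm θ p ≤ Θ ∧
          f = fun v => ∑ j, θ j * v j}, v = ∑ i, (if σ i then (1:ℝ) else -1) * f (x i)} :=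
    fun σ θ hθ => ⟨fun v => ∑ j, θ j * v j, ⟨θ, hθ, rfl⟩, rfl⟩
  have hKey : ∀ σ : Fin n → Bool,
      sSup {v : ℝ | ∃ g ∈ {g : (Fin d → ℝ) × ℝ → ℝ | ∃ θ : Fin d → ℝ, lpNorm θ p ≤ Θ ∧
          g = fun xy => sInf {v : ℝ | ∃ δ : Fin d → ℝ, (∀ j, |δ j| ≤ ε) ∧
            v = xy.2 * ∑ j, θ j * (xy.1 j + δ j)}},
          v = ∑ i, (if σ i then (1:ℝ) else -1) * g (x i, y i)}
        ≤ sSup {v : ℝ | ∃ f ∈ {f : (Fin d → ℝ) → ℝ | ∃ θ : Fin d → ℝ, lpNorm θ p ≤ Θ ∧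
            f = fun v => ∑ j, θ j * v j},
            v = ∑ i, (if τ σ i then (1:ℝ) else -1) * f (x i)}
          + ε * K * |∑ i, if σ i then (1:ℝ) else -1| := by
    intro σ
    have hgval : ∀ (θ : Fin d → ℝ), lpNorm θ p ≤ Θ → ∀ i : Fin n,
        (fun xy : (Fin d → ℝ) × ℝ => sInf {v : ℝ | ∃ δ : Fin d → ℝ, (∀ j, |δ j| ≤ ε) ∧
          v = xy.2 * ∑ j, θ j * (xy.1 j + δ j)}) (x i, y i)
        = y i * (∑ j, θ j * x i j) - ε * ∑ j, |θ j| :=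
      fun θ _ i => sInf_adv ε hε θ (x i) (hy i)
    refine csSup_le ⟨_, ⟨_, ⟨(0 : Fin d → ℝ), h0, rfl⟩, rfl⟩⟩ ?_
    rintro v ⟨g, ⟨θ, hθ, rfl⟩, rfl⟩
    simp only [hgval θ hθ]
    set L := ∑ j, |θ j| with hL
    have hLnn : 0 ≤ L := Finset.sum_nonneg fun j _ => abs_nonneg _
    have hLK : L ≤ K := hθK θ hθ
    have hsplit : ∑ i, (if σ i then (1:ℝ) else -1) * (y i * (∑ j, θ j * x i j) - ε * L)
        = (∑ i, (if τ σ i then (1:ℝ) else -1) * ∑ j, θ j * x i j)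
          - ε * L * (∑ i, if σ i then (1:ℝ) else -1) := by
      have hterm : ∀ i : Fin n, (if σ i then (1:ℝ) else -1) * (y i * (∑ j, θ j * x i j) - ε * L)
          = (if τ σ i then (1:ℝ) else -1) * (∑ j, θ j * x i j)
            - ε * L * (if σ i then (1:ℝ) else -1) := by
        intro i; rw [he σ i]; ring
      simp_rw [hterm]
      rw [Finset.sum_sub_distrib, ← Finset.mul_sum]
    rw [hsplit]
    have h1 : (∑ i, (if τ σ i then (1:ℝ) else -1) * ∑ j, θ j * x i j)
        ≤ sSup {v : ℝ | ∃ f ∈ {f : (Fin d → ℝ) → ℝ | ∃ θ : Fin d → ℝ, lpNorm θ p ≤ Θ ∧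
            f = fun v => ∑ j, θ j * v j},
            v = ∑ i, (if τ σ i then (1:ℝ) else -1) * f (x i)} :=
      le_csSup (hBbdd (τ σ)) (hBmem (τ σ) θ hθ)
    have h2 : -(ε * L * (∑ i, if σ i then (1:ℝ) else -1))
        ≤ ε * K * |∑ i, if σ i then (1:ℝ) else -1| := by
      set S := ∑ i, if σ i then (1:ℝ) else -1
      have ha : -S ≤ |S| := neg_abs_le S |> fun h => by linarith [neg_le_abs S]
      have hb : 0 ≤ |S| := abs_nonneg S
      nlinarith [mul_nonneg (mul_nonneg hε hLnn) (by linarith [neg_le_abs S] : (0:ℝ) ≤ |S| + S),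
        mul_nonneg (mul_nonneg hε (sub_nonneg.2 hLK)) hb]
    linarith
  -- assemble
  unfold empRad
  have hc1 : (0:ℝ) ≤ 1 / (n:ℝ) := by positivity
  have hc2 : (0:ℝ) ≤ 1 / (2:ℝ)^n := by positivity
  have hεK : (0:ℝ) ≤ ε * K := mul_nonneg hε hKnn
  calc (1/(n:ℝ)) * ((1/2^n) * ∑ σ : Fin n → Bool,
        sSup {v : ℝ | ∃ g ∈ {g : (Fin d → ℝ) × ℝ → ℝ | ∃ θ : Fin d → ℝ, lpNorm θ p ≤ Θ ∧
          g = fun xy => sInf {v : ℝ | ∃ δ : Fin d → ℝ, (∀ j, |δ j| ≤ ε) ∧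
            v = xy.2 * ∑ j, θ j * (xy.1 j + δ j)}},
          v = ∑ i, (if σ i then (1:ℝ) else -1) * g (x i, y i)})
      ≤ (1/(n:ℝ)) * ((1/2^n) * ∑ σ : Fin n → Bool,
          (sSup {v : ℝ | ∃ f ∈ {f : (Fin d → ℝ) → ℝ | ∃ θ : Fin d → ℝ, lpNorm θ p ≤ Θ ∧
            f = fun v => ∑ j, θ j * v j},
            v = ∑ i, (if τ σ i then (1:ℝ) else -1) * f (x i)}
          + ε * K * |∑ i, if σ i then (1:ℝ) else -1|)) := by
        exact mul_le_mul_of_nonneg_left (mul_le_mul_of_nonneg_left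
          (Finset.sum_le_sum fun σ _ => hKey σ) hc2) hc1
    _ = (1/(n:ℝ)) * ((1/2^n) * ((∑ σ : Fin n → Bool,
          sSup {v : ℝ | ∃ f ∈ {f : (Fin d → ℝ) → ℝ | ∃ θ : Fin d → ℝ, lpNorm θ p ≤ Θ ∧
            f = fun v => ∑ j, θ j * v j},
            v = ∑ i, (if σ i then (1:ℝ) else -1) * f (x i)})
          + ε * K * ∑ σ : Fin n → Bool, |∑ i, if σ i then (1:ℝ) else -1|)) := by
        rw [Finset.sum_add_distrib, ← Finset.mul_sum]
        congr 3
        exact Fintype.sum_bijective τ hτinv.bijective _ _ (fun σ => rfl)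
    _ ≤ (1/(n:ℝ)) * ((1/2^n) * ((∑ σ : Fin n → Bool,
          sSup {v : ℝ | ∃ f ∈ {f : (Fin d → ℝ) → ℝ | ∃ θ : Fin d → ℝ, lpNorm θ p ≤ Θ ∧
            f = fun v => ∑ j, θ j * v j},
            v = ∑ i, (if σ i then (1:ℝ) else -1) * f (x i)})
          + ε * K * (2^n * Real.sqrt n))) := by
        refine mul_le_mul_of_nonneg_left (mul_le_mul_of_nonneg_left
          (add_le_add_right ?_ _) hc2) hc1
        exact mul_le_mul_of_nonneg_left (abs_sum_sgn_le n (sum_sq_sgn n)) hεK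
    _ = (1/(n:ℝ)) * ((1/2^n) * ∑ σ : Fin n → Bool,
          sSup {v : ℝ | ∃ f ∈ {f : (Fin d → ℝ) → ℝ | ∃ θ : Fin d → ℝ, lpNorm θ p ≤ Θ ∧
            f = fun v => ∑ j, θ j * v j},
            v = ∑ i, (if σ i then (1:ℝ) else -1) * f (x i)})
          + ε * Θ * (d:ℝ) ^ (1 - 1/p) / Real.sqrt n := by
        have hs : (0:ℝ) < Real.sqrt n := Real.sqrt_pos.2 hnR
        have h2 : ((2:ℝ)^n) ≠ 0 := by positivity
        rw [hKdef, mul_add, mul_add]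
        congr 1
        set s := Real.sqrt (n:ℝ) with hsdef
        have hs2 : s * s = (n:ℝ) := Real.mul_self_sqrt hnR.le
        rw [← hs2]
        field_simp
end

section
/- If a weight class is constrained by ‖θ‖₁ ≤ b as well as ‖θ‖_p ≤ s, then the adversarial Rademacher complexity bound improves to R_S(F̂) ≤ R_S(F) + ε·b/√n, with no explicit dependence on the dimension d. -/
lemma sum_cross (n : ℕ) (i j : Fin n) (hij : i ≠ j) :
    ∑ σ : Fin n → Bool, (if σ i then (1:ℝ) else -1) * (if σ j then 1 else -1) = 0 := by
  have hinv : Function.Involutive (fun σ : Fin n → Bool => Function.update σ j (!σ j)) := by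
    intro σ; ext k
    by_cases hk : k = j
    · subst hk; simp
    · simp [Function.update_of_ne hk]
  have hsum := Fintype.sum_bijective _ hinv.bijective
      (fun σ : Fin n → Bool => (if σ i then (1:ℝ) else -1) * (if σ j then 1 else -1))
      (fun σ => -((if σ i then (1:ℝ) else -1) * (if σ j then 1 else -1)))
      (by
        intro σ
        simp only [Function.update_self, Function.update_of_ne hij]
        cases hσ : σ i <;> cases hσ' : σ j <;> simp)
  rw [Finset.sum_neg_distrib] at hsum
  linarith

lemma sum_sq_signs (n : ℕ) :
    ∑ σ : Fin n → Bool, (∑ i, (if σ i then (1:ℝ) else -1))^2 = n * 2^n := by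
  have h1 : ∀ σ : Fin n → Bool, (∑ i, (if σ i then (1:ℝ) else -1))^2
      = ∑ i, ∑ j, (if σ i then (1:ℝ) else -1) * (if σ j then 1 else -1) := by
    intro σ; rw [sq, Finset.sum_mul_sum]
  simp_rw [h1]
  rw [Finset.sum_comm]
  have h2 : ∀ i : Fin n, (∑ σ : Fin n → Bool, ∑ j,
      (if σ i then (1:ℝ) else -1) * (if σ j then 1 else -1)) = 2^n := by
    intro i
    rw [Finset.sum_comm]
    have h3 : ∀ j : Fin n, (∑ σ : Fin n → Bool,
        (if σ i then (1:ℝ) else -1) * (if σ j then 1 else -1))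
        = if j = i then (2:ℝ)^n else 0 := by
      intro j
      by_cases hj : j = i
      · subst hj
        have : ∀ σ : Fin n → Bool,
            (if σ j then (1:ℝ) else -1) * (if σ j then 1 else -1) = 1 := by
          intro σ; cases hσ : σ j <;> norm_num
        simp_rw [this]
        simp [Finset.card_univ]
      · rw [if_neg hj]; exact sum_cross n i j (Ne.symm hj)
    simp_rw [h3]
    rw [Finset.sum_ite_eq' Finset.univ i (fun _ => (2:ℝ)^n)]
    simp
  simp_rw [h2]
  rw [Finset.sum_const, Finset.card_univ, Fintype.card_fin, nsmul_eq_mul]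

lemma sum_abs_signs_le (n : ℕ) :
    ∑ σ : Fin n → Bool, |∑ i, (if σ i then (1:ℝ) else -1)| ≤ 2^n * Real.sqrt n := by
  have h1 := sq_sum_le_card_mul_sum_sq (s := (Finset.univ : Finset (Fin n → Bool)))
    (f := fun σ => |∑ i, (if σ i then (1:ℝ) else -1)|)
  simp only [sq_abs, Finset.card_univ, Fintype.card_fun, Fintype.card_bool, Fintype.card_fin] at h1
  rw [sum_sq_signs] at h1
  push_cast at h1
  have hnn : 0 ≤ ∑ σ : Fin n → Bool, |∑ i, (if σ i then (1:ℝ) else -1)| :=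
    Finset.sum_nonneg fun _ _ => abs_nonneg _
  have hB : (0:ℝ) ≤ 2^n * Real.sqrt n := by positivity
  refine (pow_le_pow_iff_left₀ hnn hB two_ne_zero).mp ?_
  calc (∑ σ : Fin n → Bool, |∑ i, (if σ i then (1:ℝ) else -1)|)^2
      ≤ 2^n * (n * 2^n) := h1
    _ = (2^n * Real.sqrt n)^2 := by
        rw [mul_pow, Real.sq_sqrt (Nat.cast_nonneg n)]; ring

lemma adv_inf_eq (d : ℕ) (ε : ℝ) (hε : 0 ≤ ε) (θ xx : Fin d → ℝ) (yy : ℝ)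
    (hyy : yy = 1 ∨ yy = -1) :
    sInf {v : ℝ | ∃ δ : Fin d → ℝ, (∀ j, |δ j| ≤ ε) ∧
        v = yy * ∑ j, θ j * (xx j + δ j)}
      = yy * (∑ j, θ j * xx j) - ε * ∑ j, |θ j| := by
  have hy1 : |yy| = 1 := by rcases hyy with h | h <;> simp [h]
  have hysq : yy * yy = 1 := by rcases hyy with h | h <;> simp [h]
  set S := {v : ℝ | ∃ δ : Fin d → ℝ, (∀ j, |δ j| ≤ ε) ∧
      v = yy * ∑ j, θ j * (xx j + δ j)} with hS
  have hval : ∀ δ : Fin d → ℝ, yy * (∑ j, θ j * (xx j + δ j))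
      = yy * (∑ j, θ j * xx j) + ∑ j, yy * (θ j * δ j) := by
    intro δ
    simp_rw [mul_add, Finset.sum_add_distrib, mul_add, Finset.mul_sum]
  have hlb : ∀ v ∈ S, yy * (∑ j, θ j * xx j) - ε * ∑ j, |θ j| ≤ v := by
    rintro v ⟨δ, hδ, rfl⟩
    rw [hval]
    have : ∀ j, -(ε * |θ j|) ≤ yy * (θ j * δ j) := by
      intro j
      have h1 : |yy * (θ j * δ j)| ≤ ε * |θ j| := by
        rw [abs_mul, hy1, one_mul, abs_mul]
        calc |θ j| * |δ j| ≤ |θ j| * ε :=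
              mul_le_mul_of_nonneg_left (hδ j) (abs_nonneg _)
          _ = ε * |θ j| := mul_comm _ _
      linarith [neg_abs_le (yy * (θ j * δ j))]
    have hsum : -(ε * ∑ j, |θ j|) ≤ ∑ j, yy * (θ j * δ j) := by
      rw [Finset.mul_sum, ← Finset.sum_neg_distrib]
      exact Finset.sum_le_sum fun j _ => this j
    linarith
  refine le_antisymm ?_ (le_csInf ⟨_, ⟨0, fun j => by simpa using hε, rfl⟩⟩ hlb)
  have hmem : yy * (∑ j, θ j * xx j) - ε * ∑ j, |θ j| ∈ S := by
    refine ⟨fun j => -(ε * yy) * (if 0 ≤ θ j then 1 else -1), fun j => ?_, ?_⟩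
    · rw [abs_mul, abs_neg, abs_mul, hy1]
      have : |if 0 ≤ θ j then (1:ℝ) else -1| = 1 := by split <;> norm_num
      rw [this]; simp [abs_of_nonneg hε]
    · rw [hval]
      have : ∀ j, yy * (θ j * (-(ε * yy) * (if 0 ≤ θ j then 1 else -1)))
          = -(ε * |θ j|) := by
        intro j
        have habs : θ j * (if 0 ≤ θ j then (1:ℝ) else -1) = |θ j| := by
          split_ifs with h
          · rw [abs_of_nonneg h]; ring
          · rw [abs_of_neg (lt_of_not_ge h)]; ring
        calc yy * (θ j * (-(ε * yy) * (if 0 ≤ θ j then 1 else -1)))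
            = -(ε * (yy * yy) * (θ j * (if 0 ≤ θ j then 1 else -1))) := by ring
          _ = -(ε * |θ j|) := by rw [hysq, habs]; ring
      simp_rw [this]
      rw [Finset.sum_neg_distrib, ← Finset.mul_sum]
      ring
  exact csInf_le ⟨_, hlb⟩ hmem

/-- With an additional `ℓ₁` constraint `‖θ‖₁ ≤ b` on the weight class, the adversarial
Rademacher complexity bound improves to `R_S(F̂) ≤ R_S(F) + εb/√n`, with no explicit
dependence on the dimension `d`. -/
theorem adv_empRad_upper_l1 (d n : ℕ) (p : ℝ) (hp : 1 ≤ p) (ε s b : ℝ)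
    (hε : 0 ≤ ε) (hs : 0 ≤ s) (hb : 0 ≤ b)
    (x : Fin n → (Fin d → ℝ)) (y : Fin n → ℝ) (hy : ∀ i, y i = 1 ∨ y i = -1) :
    empRad n (fun i => (x i, y i))
        {g : (Fin d → ℝ) × ℝ → ℝ | ∃ θ : Fin d → ℝ,
          lpNorm θ p ≤ s ∧ (∑ j, |θ j|) ≤ b ∧
          g = fun xy => sInf {v : ℝ | ∃ δ : Fin d → ℝ, (∀ j, |δ j| ≤ ε) ∧
            v = xy.2 * ∑ j, θ j * (xy.1 j + δ j)}} ≤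
      empRad n x {f : (Fin d → ℝ) → ℝ | ∃ θ : Fin d → ℝ,
          lpNorm θ p ≤ s ∧ (∑ j, |θ j|) ≤ b ∧ f = fun v => ∑ j, θ j * v j} +
        ε * b / Real.sqrt n := by
  rcases Nat.eq_zero_or_pos n with hn | hn
  · subst hn
    simp [empRad]
  -- notation
  have hθ0 : lpNorm (0 : Fin d → ℝ) p = 0 := by
    have hp0 : p ≠ 0 := by positivity
    have h1p : (1:ℝ)/p ≠ 0 := by positivity
    simp only [lpNorm, Pi.zero_apply, abs_zero, Real.zero_rpow hp0, Finset.sum_const,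
      smul_zero]
    rw [one_div]
    exact Real.zero_rpow (inv_ne_zero hp0)
  set sg : (Fin n → Bool) → Fin n → ℝ := fun σ i => if σ i then (1:ℝ) else -1 with hsg
  set AdvSet : (Fin n → Bool) → Set ℝ := fun σ =>
    {v : ℝ | ∃ θ : Fin d → ℝ, lpNorm θ p ≤ s ∧ (∑ j, |θ j|) ≤ b ∧
      v = ∑ i, sg σ i * (y i * (∑ j, θ j * x i j) - ε * ∑ j, |θ j|)} with hAdvSet
  set PSet : (Fin n → Bool) → Set ℝ := fun σ =>
    {v : ℝ | ∃ f ∈ {f : (Fin d → ℝ) → ℝ | ∃ θ : Fin d → ℝ,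
      lpNorm θ p ≤ s ∧ (∑ j, |θ j|) ≤ b ∧ f = fun v => ∑ j, θ j * v j},
      v = ∑ i, sg σ i * f (x i)} with hPSet
  -- rewrite the LHS sets via the inner-infimum computation
  have hLHS : empRad n (fun i => (x i, y i))
      {g : (Fin d → ℝ) × ℝ → ℝ | ∃ θ : Fin d → ℝ,
        lpNorm θ p ≤ s ∧ (∑ j, |θ j|) ≤ b ∧
        g = fun xy => sInf {v : ℝ | ∃ δ : Fin d → ℝ, (∀ j, |δ j| ≤ ε) ∧
          v = xy.2 * ∑ j, θ j * (xy.1 j + δ j)}}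
      = (1 / n) * ((1 / 2 ^ n) * ∑ σ : Fin n → Bool, sSup (AdvSet σ)) := by
    unfold empRad
    congr 2
    refine Finset.sum_congr rfl fun σ _ => ?_
    congr 1
    ext v
    constructor
    · rintro ⟨g, ⟨θ, hθp, hθ1, rfl⟩, rfl⟩
      refine ⟨θ, hθp, hθ1, ?_⟩
      have h := fun i => adv_inf_eq d ε hε θ (x i) (y i) (hy i)
      simp only [h]
      rfl
    · rintro ⟨θ, hθp, hθ1, rfl⟩
      refine ⟨_, ⟨θ, hθp, hθ1, rfl⟩, ?_⟩
      have h := fun i => adv_inf_eq d ε hε θ (x i) (y i) (hy i)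
      simp only [h]
      rfl
  rw [hLHS]
  have hRHS : empRad n x {f : (Fin d → ℝ) → ℝ | ∃ θ : Fin d → ℝ,
      lpNorm θ p ≤ s ∧ (∑ j, |θ j|) ≤ b ∧ f = fun v => ∑ j, θ j * v j}
      = (1 / n) * ((1 / 2 ^ n) * ∑ σ : Fin n → Bool, sSup (PSet σ)) := rfl
  rw [hRHS]
  -- basic facts
  have hAdvNE : ∀ σ, (AdvSet σ).Nonempty := by
    intro σ
    refine ⟨0, 0, by rw [hθ0]; exact hs, by simpa using hb, ?_⟩
    simp
  have hPNE : ∀ σ, (PSet σ).Nonempty := by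
    intro σ
    refine ⟨0, fun v => ∑ j, (0:ℝ) * v j, ⟨0, by rw [hθ0]; exact hs, by simpa using hb, rfl⟩, ?_⟩
    simp
  have hPbdd : ∀ σ, BddAbove (PSet σ) := by
    intro σ
    refine ⟨b * ∑ i, ∑ j, |x i j|, ?_⟩
    rintro v ⟨f, ⟨θ, hθp, hθ1, rfl⟩, rfl⟩
    have hsg1 : ∀ i, |sg σ i| = 1 := by
      intro i; simp only [hsg]; split <;> norm_num
    calc (∑ i, sg σ i * ∑ j, θ j * x i j)
        ≤ |∑ i, sg σ i * ∑ j, θ j * x i j| := le_abs_self _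
      _ ≤ ∑ i, |sg σ i * ∑ j, θ j * x i j| := Finset.abs_sum_le_sum_abs _ _
      _ = ∑ i, |∑ j, θ j * x i j| := by
          refine Finset.sum_congr rfl fun i _ => ?_
          rw [abs_mul, hsg1, one_mul]
      _ ≤ ∑ i, ∑ j, |θ j * x i j| :=
          Finset.sum_le_sum fun i _ => Finset.abs_sum_le_sum_abs _ _
      _ ≤ ∑ i, ∑ j, b * |x i j| := by
          refine Finset.sum_le_sum fun i _ => Finset.sum_le_sum fun j _ => ?_
          rw [abs_mul]
          refine mul_le_mul_of_nonneg_right ?_ (abs_nonneg _)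
          exact le_trans (Finset.single_le_sum (f := fun j => |θ j|)
            (fun _ _ => abs_nonneg _) (Finset.mem_univ j)) hθ1
      _ = b * ∑ i, ∑ j, |x i j| := by rw [Finset.mul_sum]; simp_rw [Finset.mul_sum]
  -- the sign-flip bijection
  set flip : (Fin n → Bool) → (Fin n → Bool) := fun σ i => if y i = 1 then σ i else !σ i
    with hflip
  have hflip_sg : ∀ σ i, sg (flip σ) i = y i * sg σ i := by
    intro σ i
    rcases hy i with h | h
    · simp [hsg, hflip, h]
    · have hne : y i ≠ 1 := by rw [h]; norm_num
      simp only [hsg, hflip, if_neg hne, h]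
      cases hσ : σ i <;> norm_num
  have hflip_inv : Function.Involutive flip := by
    intro σ; ext i
    rcases hy i with h | h
    · simp [hflip, h]
    · have hne : y i ≠ 1 := by rw [h]; norm_num
      simp [hflip, if_neg hne]
  -- per-σ bound
  have hkey : ∀ σ : Fin n → Bool,
      sSup (AdvSet σ) ≤ sSup (PSet (flip σ)) + ε * b * |∑ i, sg σ i| := by
    intro σ
    refine csSup_le (hAdvNE σ) ?_
    rintro v ⟨θ, hθp, hθ1, rfl⟩
    have hL1 : 0 ≤ ∑ j, |θ j| := Finset.sum_nonneg fun _ _ => abs_nonneg _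
    have hsplit : (∑ i, sg σ i * (y i * (∑ j, θ j * x i j) - ε * ∑ j, |θ j|))
        = (∑ i, sg (flip σ) i * ∑ j, θ j * x i j)
          - ε * (∑ j, |θ j|) * (∑ i, sg σ i) := by
      have step1 : (∑ i, sg σ i * (y i * (∑ j, θ j * x i j) - ε * ∑ j, |θ j|))
          = ∑ i, ((y i * sg σ i) * (∑ j, θ j * x i j) - (ε * ∑ j, |θ j|) * sg σ i) :=
        Finset.sum_congr rfl fun i _ => by ring
      rw [step1, Finset.sum_sub_distrib, ← Finset.mul_sum]
      simp_rw [hflip_sg]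
    rw [hsplit]
    have hmem : (∑ i, sg (flip σ) i * ∑ j, θ j * x i j) ∈ PSet (flip σ) :=
      ⟨fun v => ∑ j, θ j * v j, ⟨θ, hθp, hθ1, rfl⟩, rfl⟩
    have h1 : (∑ i, sg (flip σ) i * ∑ j, θ j * x i j) ≤ sSup (PSet (flip σ)) :=
      le_csSup (hPbdd _) hmem
    have h2 : -(ε * (∑ j, |θ j|) * (∑ i, sg σ i)) ≤ ε * b * |∑ i, sg σ i| := by
      have ha : ε * (∑ j, |θ j|) * (-(∑ i, sg σ i)) ≤ ε * (∑ j, |θ j|) * |∑ i, sg σ i| :=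
        mul_le_mul_of_nonneg_left (neg_le_abs _) (mul_nonneg hε hL1)
      have hb2 : ε * (∑ j, |θ j|) * |∑ i, sg σ i| ≤ ε * b * |∑ i, sg σ i| :=
        mul_le_mul_of_nonneg_right (mul_le_mul_of_nonneg_left hθ1 hε) (abs_nonneg _)
      linarith
    linarith
  -- sum over σ
  have hsum1 : (∑ σ : Fin n → Bool, sSup (AdvSet σ))
      ≤ (∑ σ : Fin n → Bool, sSup (PSet (flip σ)))
        + ε * b * ∑ σ : Fin n → Bool, |∑ i, sg σ i| := by
    rw [Finset.mul_sum, ← Finset.sum_add_distrib]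
    exact Finset.sum_le_sum fun σ _ => hkey σ
  have hsum2 : (∑ σ : Fin n → Bool, sSup (PSet (flip σ)))
      = ∑ σ : Fin n → Bool, sSup (PSet σ) :=
    Fintype.sum_bijective flip hflip_inv.bijective _ _ fun σ => rfl
  have hT : (∑ σ : Fin n → Bool, |∑ i, sg σ i|) ≤ 2^n * Real.sqrt n := sum_abs_signs_le n
  have hεb : (0:ℝ) ≤ ε * b := mul_nonneg hε hb
  have hSadv : (∑ σ : Fin n → Bool, sSup (AdvSet σ))
      ≤ (∑ σ : Fin n → Bool, sSup (PSet σ)) + ε * b * (2^n * Real.sqrt n) := by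
    rw [hsum2] at hsum1
    have := mul_le_mul_of_nonneg_left hT hεb
    linarith
  -- final arithmetic
  have hnpos : (0:ℝ) < n := by exact_mod_cast hn
  have hspos : (0:ℝ) < Real.sqrt n := Real.sqrt_pos.mpr hnpos
  have hsq : Real.sqrt n * Real.sqrt n = (n:ℝ) := Real.mul_self_sqrt hnpos.le
  have key : (1/(n:ℝ)) * ((1/2^n) * (ε * b * (2^n * Real.sqrt n))) = ε * b / Real.sqrt n := by
    have e1 : (1/(n:ℝ)) * ((1/2^n) * (ε * b * (2^n * Real.sqrt n)))
        = ε * b * Real.sqrt n / n := by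
      field_simp
    have e2 : ε * b * Real.sqrt n / (n:ℝ) = ε * b / Real.sqrt n := by
      rw [div_eq_div_iff hnpos.ne' hspos.ne']
      linear_combination (ε * b) * hsq
    rw [e1, e2]
  calc (1/(n:ℝ)) * ((1/2^n) * ∑ σ : Fin n → Bool, sSup (AdvSet σ))
      ≤ (1/(n:ℝ)) * ((1/2^n) * ((∑ σ : Fin n → Bool, sSup (PSet σ))
          + ε * b * (2^n * Real.sqrt n))) := by
        refine mul_le_mul_of_nonneg_left ?_ (by positivity)
        exact mul_le_mul_of_nonneg_left hSadv (by positivity)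
    _ = (1/(n:ℝ)) * ((1/2^n) * ∑ σ : Fin n → Bool, sSup (PSet σ))
          + (1/(n:ℝ)) * ((1/2^n) * (ε * b * (2^n * Real.sqrt n))) := by ring
    _ = (1/(n:ℝ)) * ((1/2^n) * ∑ σ : Fin n → Bool, sSup (PSet σ)) + ε * b / Real.sqrt n := by
        rw [key]
end
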